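/- Every hypergraph H without empty hyperedges whose incidence graph is a bipartite permutation graph has a join path. -/

import Mathlib

variable {V : Type} [DecidableEq V]

/-- A join tree of a hypergraph with edge set `E`: a tree on node set `E` such that
for every vertex `v`, the edges containing `v` induce a connected subtree. -/
structure JoinTreeOf (E : Finset (Finset V)) where
  T : SimpleGraph {f // f ∈ E}
  isTree : T.IsTree
  conn : ∀ v : V, (T.induce {f : {f // f ∈ E} | v ∈ f.1}).Preconnected

/-- `x` lies on the (unique) path from `r` to `y` in `G`. -/
def onTreePath {α : Type} (G : SimpleGraph α) (r y x : α) : Prop :=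
  ∀ p : G.Walk r y, p.IsPath → x ∈ p.support

/-- A disjoint branches decomposition of the hypergraph with edge set `E`, rooted at `root`:
a join tree rooted at `root` in which any two edges on different branches
(neither an ancestor of the other) are disjoint. -/
structure DBD (E : Finset (Finset V)) (root : Finset V) where
  J : JoinTreeOf E
  rootMem : root ∈ E
  disj : ∀ a b : {f // f ∈ E}, a ≠ b →
    ¬ onTreePath J.T ⟨root, rootMem⟩ b a →
    ¬ onTreePath J.T ⟨root, rootMem⟩ a b →
    a.1 ∩ b.1 = ∅

/-- `H` is db-rootable in `e`. -/
def DbRootable (E : Finset (Finset V)) (e : Finset V) : Prop := Nonempty (DBD E e)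

/-- Two hyperedges are linked by a path of pairwise-intersecting edges of `E`. -/
def edgeLinked (E : Finset (Finset V)) (a b : Finset V) : Prop :=
  Relation.ReflTransGen (fun x y => x ∈ E ∧ y ∈ E ∧ (x ∩ y).Nonempty) a b

open Classical in
/-- The connected component (as a set of edges) of the edge `e` in the hypergraph `E`. -/
noncomputable def component (E : Finset (Finset V)) (e : Finset V) : Finset (Finset V) :=
  E.filter (edgeLinked E e)

/-- `C` is (the edge set of) a connected component of the hypergraph with edge set `E`. -/
def IsComponent (E C : Finset (Finset V)) : Prop := ∃ e ∈ E, C = component E e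

/-- The hypergraph with edge set `E` is connected. -/
def HGConnected (E : Finset (Finset V)) : Prop := ∀ a ∈ E, ∀ b ∈ E, edgeLinked E a b

/-- Vertices `u` and `w` are connected by a path of edges in `E`. -/
def vtxLinked (E : Finset (Finset V)) (u w : V) : Prop :=
  Relation.ReflTransGen (fun x y => ∃ f ∈ E, x ∈ f ∧ y ∈ f) u w

/-- The hypergraph has a join path: a join tree whose underlying tree is a path
(every node has at most two neighbours). -/
def HasJoinPath (E : Finset (Finset V)) : Prop :=
  ∃ J : JoinTreeOf E, ∀ f : {f // f ∈ E}, (J.T.neighborSet f).ncard ≤ 2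

/-- every hypergraph without empty hyperedges whose incidence graph is a
bipartite permutation graph (i.e. admits a strong ordering) has a join path. -/
theorem stmt1 (E : Finset (Finset V)) (hE : E.Nonempty) (hne : ∅ ∉ E)
    (ltV : V → V → Prop) (ltE : Finset V → Finset V → Prop)
    (hV : IsStrictTotalOrder V ltV)
    (hEirr : ∀ a ∈ E, ¬ ltE a a)
    (hEtrans : ∀ a ∈ E, ∀ b ∈ E, ∀ c ∈ E, ltE a b → ltE b c → ltE a c)
    (hEtot : ∀ a ∈ E, ∀ b ∈ E, a ≠ b → ltE a b ∨ ltE b a)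
    (strong : ∀ v v' : V, ∀ e e' : Finset V, e ∈ E → e' ∈ E → ltV v v' → ltE e e' →
      v ∈ e → v' ∈ e' → v ∈ e' ∧ v' ∈ e) :
    HasJoinPath E := by
  classical
  set S := {f // f ∈ E} with hS
  haveI : Nonempty S := ⟨⟨hE.choose, hE.choose_spec⟩⟩
  let r : S → S → Prop := fun a b => ltE a.1 b.1
  haveI hSTO : IsStrictTotalOrder S r :=
    { irrefl := fun a h => hEirr a.1 a.2 h
      trans := fun a b c => hEtrans a.1 a.2 b.1 b.2 c.1 c.2
      trichotomous := fun a b hab hba => by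
        by_contra h
        rcases hEtot a.1 a.2 b.1 b.2 (fun he => h (Subtype.ext he)) with h1 | h1
        · exact hab h1
        · exact hba h1 }
  let L : LinearOrder S := linearOrderOfSTO r
  set n := E.card with hn
  let φ := @monoEquivOfFin S _ L _ (Fintype.card_coe E)
  let ψ : Fin n ≃ S := φ.toEquiv
  let idx : S → Fin n := fun a => ψ.symm a
  have idxinj : ∀ a b : S, (idx a).val = (idx b).val → a = b := by
    intro a b h
    exact ψ.symm.injective (Fin.ext h)
  have idxφ : ∀ (m : ℕ) (hm : m < n), (idx (ψ ⟨m, hm⟩)).val = m := by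
    intro m hm
    show ((ψ.symm (ψ ⟨m, hm⟩)) : Fin n).val = m
    rw [ψ.symm_apply_apply]
  have hmono : ∀ i j : Fin n, i ≤ j → (ψ i = ψ j ∨ r (ψ i) (ψ j)) :=
    fun i j hij => φ.map_rel_iff'.mpr hij
  have hlt : ∀ a b : S, (idx a).val < (idx b).val → r a b := by
    intro a b h
    have e1 : ψ (idx a) = a := ψ.apply_symm_apply a
    have e2 : ψ (idx b) = b := ψ.apply_symm_apply b
    have h2 := hmono (idx a) (idx b) (le_of_lt h)
    rw [e1, e2] at h2
    rcases h2 with h2 | h2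
    · exfalso; rw [h2] at h; omega
    · exact h2
  -- convexity
  have hconv : ∀ (x y z : S) (v : V), r x y → r y z → v ∈ x.1 → v ∈ z.1 → v ∈ y.1 := by
    intro x y z v hxy hyz hvx hvz
    have hyne : y.1.Nonempty := Finset.nonempty_iff_ne_empty.mpr (fun h => hne (h ▸ y.2))
    obtain ⟨v', hv'⟩ := hyne
    rcases (if h1 : ltV v v' then Or.inl h1 else if h2 : ltV v' v then Or.inr (Or.inr h2) else Or.inr (Or.inl (hV.trichotomous v v' h1 h2)) : ltV v v' ∨ v = v' ∨ ltV v' v) with h | h | h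
    · exact (strong v v' x.1 y.1 x.2 y.2 h hxy hvx hv').1
    · exact h ▸ hv'
    · exact (strong v' v y.1 z.1 y.2 z.2 h hyz hv' hvz).2
  -- the path graph
  let T : SimpleGraph S :=
    { Adj := fun a b => (idx a).val + 1 = (idx b).val ∨ (idx b).val + 1 = (idx a).val
      symm := ⟨fun a b h => h.symm⟩
      loopless := ⟨fun a h => by omega⟩ }
  have hTadj : ∀ a b : S, T.Adj a b ↔
      ((idx a).val + 1 = (idx b).val ∨ (idx b).val + 1 = (idx a).val) := fun _ _ => Iff.rfl
  -- connectivity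
  have chain : ∀ (k : ℕ) (a b : S), (idx a).val + k = (idx b).val → T.Reachable a b := by
    intro k
    induction k with
    | zero =>
      intro a b h
      rw [idxinj a b (by omega)]
    | succ k ih =>
      intro a b h
      have hm : (idx a).val + k < n := by have := (idx b).isLt; omega
      set b' : S := ψ ⟨(idx a).val + k, hm⟩ with hb'def
      have hb' : (idx b').val = (idx a).val + k := idxφ _ hm
      have h1 : T.Reachable a b' := ih a b' hb'.symm
      have h2 : T.Adj b' b := Or.inl (by omega)
      exact h1.trans h2.reachable
  have hpre : T.Preconnected := by
    intro a b
    rcases Nat.le_total (idx a).val (idx b).val with h | h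
    · exact chain ((idx b).val - (idx a).val) a b (by omega)
    · exact (chain ((idx a).val - (idx b).val) b a (by omega)).symm
  -- bridge helper
  have hbridge : ∀ a b : S, (idx a).val + 1 = (idx b).val →
      ∀ p : T.Walk a b, s(a, b) ∈ p.edges := by
    intro a b hab p
    obtain ⟨d, hd, hfst, hsnd⟩ := p.exists_boundary_dart
      {x : S | (idx x).val ≤ (idx a).val} (show (idx a).val ≤ (idx a).val from le_refl _)
      (by simp only [Set.mem_setOf_eq]; omega)
    simp only [Set.mem_setOf_eq, not_le] at hfst hsnd
    have hadj := d.adj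
    rw [hTadj] at hadj
    have h1 : (idx d.fst).val = (idx a).val := by omega
    have h2 : (idx d.snd).val = (idx b).val := by omega
    have e1 : d.fst = a := idxinj _ _ h1
    have e2 : d.snd = b := idxinj _ _ h2
    have hmem : d.edge ∈ p.edges := List.mem_map_of_mem hd
    have he : s(a, b) = d.edge := by rw [← e1, ← e2]; rfl
    rwa [he]
  have hacyc : T.IsAcyclic := by
    rw [SimpleGraph.isAcyclic_iff_forall_adj_isBridge]
    intro a b hab
    rw [SimpleGraph.isBridge_iff_forall_walk_mem_edges]
    intro p
    rcases hab with h | h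
    · exact hbridge a b h p
    · have := hbridge b a h p.reverse
      rw [SimpleGraph.Walk.edges_reverse, List.mem_reverse, Sym2.eq_swap] at this
      exact this
  -- the conn condition
  have hconn : ∀ v : V, (T.induce {f : S | v ∈ f.1}).Preconnected := by
    intro v
    have chainP : ∀ (k : ℕ) (a b : {f : S | v ∈ f.1}),
        (idx a.1).val + k = (idx b.1).val → (T.induce {f : S | v ∈ f.1}).Reachable a b := by
      intro k
      induction k with
      | zero =>
        intro a b h
        have : a = b := Subtype.ext (idxinj _ _ (by omega))
        rw [this]
      | succ k ih =>
        intro a b h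
        have hm : (idx a.1).val + k < n := by have := (idx b.1).isLt; omega
        set s' : S := φ ⟨(idx a.1).val + k, hm⟩ with hs'def
        have hs' : (idx s').val = (idx a.1).val + k := idxφ _ hm
        have hvmem : v ∈ s'.1 := by
          rcases Nat.eq_zero_or_pos k with hk | hk
          · have : s' = a.1 := idxinj _ _ (by omega)
            rw [this]; exact a.2
          · exact hconv a.1 s' b.1 v (hlt _ _ (by omega)) (hlt _ _ (by omega)) a.2 b.2
        have h1 := ih a ⟨s', hvmem⟩ hs'.symm
        have h2 : (T.induce {f : S | v ∈ f.1}).Adj ⟨s', hvmem⟩ b := by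
          show T.Adj s' b.1
          exact Or.inl (by omega)
        exact h1.trans h2.reachable
    intro a b
    rcases Nat.le_total (idx a.1).val (idx b.1).val with h | h
    · exact chainP ((idx b.1).val - (idx a.1).val) a b (by omega)
    · exact (chainP ((idx a.1).val - (idx b.1).val) b a (by omega)).symm
  refine ⟨⟨T, ⟨⟨hpre⟩, hacyc⟩, hconn⟩, ?_⟩
  -- degree bound
  intro a
  by_cases h1 : (idx a).val + 1 < n
  · by_cases h2 : 0 < (idx a).val
    · have hsub : T.neighborSet a ⊆ {ψ ⟨(idx a).val + 1, h1⟩, ψ ⟨(idx a).val - 1, by have := (idx a).isLt; omega⟩} := by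
        intro b hb
        have hbb := (idx b).isLt
        rcases hb with h | h
        · left
          apply idxinj
          rw [idxφ]; omega
        · right
          apply idxinj
          rw [idxφ]; omega
      calc (T.neighborSet a).ncard ≤ _ := Set.ncard_le_ncard hsub (Set.toFinite _)
        _ ≤ 2 := by
          refine le_trans (Set.ncard_insert_le _ _) ?_
          simp [Set.ncard_singleton]
    · have hsub : T.neighborSet a ⊆ {ψ ⟨(idx a).val + 1, h1⟩} := by
        intro b hb
        rcases hb with h | h
        · apply idxinj
          rw [idxφ]; omega
        · exfalso; omega
      calc (T.neighborSet a).ncard ≤ _ := Set.ncard_le_ncard hsub (Set.toFinite _)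
        _ ≤ 2 := by simp [Set.ncard_singleton]
  · by_cases h2 : 0 < (idx a).val
    · have hsub : T.neighborSet a ⊆ {ψ ⟨(idx a).val - 1, by have := (idx a).isLt; omega⟩} := by
        intro b hb
        rcases hb with h | h
        · exfalso; have := (idx b).isLt; omega
        · have := (idx b).isLt
          apply idxinj
          rw [idxφ]; omega
      calc (T.neighborSet a).ncard ≤ _ := Set.ncard_le_ncard hsub (Set.toFinite _)
        _ ≤ 2 := by simp [Set.ncard_singleton]
    · have hsub : T.neighborSet a ⊆ ∅ := by
        intro b hb
        rcases hb with h | h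
        · exfalso; have := (idx b).isLt; omega
        · exfalso; omega
      calc (T.neighborSet a).ncard ≤ _ := Set.ncard_le_ncard hsub (Set.toFinite _)
        _ ≤ 2 := by simp
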